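/- Fix p > 1/2. For each sufficiently small δ > 0, write the nontrivial solution α₂(δ) ∈ (0,1) of (δ/p)^{2pδ/(p−δ)} (α(δ/p − 1) + 1)^{−2pδ/(p−δ)} = α as α₂(δ) = 1 − δ x_δ. Then x_δ converges as δ → 0⁺ to the unique positive solution x(p) of x = 2 ln(1 + px). -/

import Mathlib

open Real Filter Topology

/-- `log(1+t)/t` is strictly decreasing (slope of secant of `log` through `(1,0)`). -/
lemma logL_anti {u v : ℝ} (hu : -1 < u) (huv : u < v) (hu0 : u ≠ 0) (hv0 : v ≠ 0) :
    Real.log (1 + v) / v < Real.log (1 + u) / u := by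
  have h := strictConcaveOn_log_Ioi.secant_strict_mono (a := 1) (x := 1 + u) (y := 1 + v)
    (by norm_num) (by simp only [Set.mem_Ioi]; linarith) (by simp only [Set.mem_Ioi]; linarith)
    (by intro h; apply hu0; linarith [h]) (by intro h; apply hv0; linarith [h]) (by linarith)
  simpa using h

lemma key_ineq {δ c u v : ℝ} (hδ : 0 < δ) (hc : 0 < c) (hu : 0 < u) (huv : u < v)
    (hv1 : δ * v < 1) :
    (-Real.log (1 - δ * u)) * Real.log (1 + c * v)
      < (-Real.log (1 - δ * v)) * Real.log (1 + c * u) := by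
  have hv : 0 < v := hu.trans huv
  have hu1 : δ * u < 1 := by nlinarith
  -- F u / u < F v / v
  have h1 : (-Real.log (1 - δ * u)) / u < (-Real.log (1 - δ * v)) / v := by
    have h := logL_anti (u := -(δ * v)) (v := -(δ * u)) (by linarith) (by nlinarith)
      (by nlinarith) (by nlinarith)
    have e1 : (1 : ℝ) + -(δ * v) = 1 - δ * v := by ring
    have e2 : (1 : ℝ) + -(δ * u) = 1 - δ * u := by ring
    rw [e1, e2, div_neg, div_neg, neg_lt_neg_iff,
      div_lt_div_iff₀ (by positivity) (by positivity)] at h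
    rw [div_lt_div_iff₀ hu hv]
    nlinarith [h]
  -- G v / v < G u / u
  have h2 : Real.log (1 + c * v) / v < Real.log (1 + c * u) / u := by
    have h := logL_anti (u := c * u) (v := c * v) (by nlinarith) (by nlinarith)
      (by positivity) (by positivity)
    rw [div_lt_div_iff₀ (by positivity) (by positivity)] at h
    rw [div_lt_div_iff₀ hv hu]
    nlinarith [h]
  -- positivity facts
  have hFu : 0 < -Real.log (1 - δ * u) := by
    have : Real.log (1 - δ * u) < 0 := Real.log_neg (by nlinarith) (by nlinarith)
    linarith
  have hGv : 0 < Real.log (1 + c * v) := Real.log_pos (by nlinarith)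
  have hGu : 0 < Real.log (1 + c * u) := Real.log_pos (by nlinarith)
  rw [div_lt_div_iff₀ hu hv] at h1
  rw [div_lt_div_iff₀ hv hu] at h2
  nlinarith [mul_pos hFu hGv, mul_pos hGu hGv]

lemma root_compare {δ c e r : ℝ} (hδ : 0 < δ) (hc : 0 < c) (he : 0 < e)
    (hr0 : 0 < r) (hr1 : δ * r < 1)
    (hroot : Real.log (1 - δ * r) + e * Real.log (1 + c * r) = 0) :
    (∀ a, 0 < a → δ * a < 1 →
        0 < Real.log (1 - δ * a) + e * Real.log (1 + c * a) → a < r) ∧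
    (∀ b, 0 < b → δ * b < 1 →
        Real.log (1 - δ * b) + e * Real.log (1 + c * b) < 0 → r < b) := by
  have hGr : 0 < Real.log (1 + c * r) := Real.log_pos (by nlinarith)
  constructor
  · intro a ha0 ha1 hpos
    by_contra h
    push_neg at h  -- r ≤ a
    rcases eq_or_lt_of_le h with h | h
    · rw [← h] at hpos; linarith
    · have := key_ineq hδ hc hr0 h ha1
      have hGa : 0 < Real.log (1 + c * a) := Real.log_pos (by nlinarith)
      -- F r = e * G r, F a < e * G a
      nlinarith [this]
  · intro b hb0 hb1 hneg
    by_contra h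
    push_neg at h  -- b ≤ r
    rcases eq_or_lt_of_le h with h | h
    · rw [h] at hneg; linarith
    · have := key_ineq hδ hc hb0 h hr1
      have hGb : 0 < Real.log (1 + c * b) := Real.log_pos (by nlinarith)
      nlinarith [this]

lemma g_pos_small {p x : ℝ} (hp : 0 < p) (hx : 0 < x) (hpx : p * x < 2 * p - 1) :
    0 < 2 * Real.log (1 + p * x) - x := by
  have hpx0 : 0 < 1 + p * x := by positivity
  have h := Real.one_sub_inv_le_log_of_pos hpx0
  have hinv : (1 + p * x)⁻¹ = 1 / (1 + p * x) := by rw [inv_eq_one_div]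
  rw [hinv] at h
  have h2 : p * x / (1 + p * x) ≤ Real.log (1 + p * x) := by
    have : 1 - 1 / (1 + p * x) = p * x / (1 + p * x) := by field_simp; ring
    linarith [this ▸ h]
  rw [div_le_iff₀ hpx0] at h2
  nlinarith [mul_pos hx (by linarith : (0:ℝ) < 2 * p - 1 - p * x)]

lemma g_neg_large {p x : ℝ} (hp : 1 / 2 < p) (hx : 16 * p - 8 < x) :
    2 * Real.log (1 + p * x) - x < 0 := by
  have hx0 : 0 < x := by linarith
  have hpx0 : 0 < 1 + p * x := by nlinarith
  have hs : Real.log (1 + p * x) = 2 * Real.log (Real.sqrt (1 + p * x)) := by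
    rw [Real.log_sqrt hpx0.le]; ring
  have hsub := Real.log_le_sub_one_of_pos (Real.sqrt_pos.2 hpx0)
  have hsq : Real.sqrt (1 + p * x) < (x + 4) / 4 := by
    rw [show (x + 4) / 4 = Real.sqrt (((x + 4) / 4) ^ 2) from
      (Real.sqrt_sq (by linarith)).symm]
    apply Real.sqrt_lt_sqrt hpx0.le
    nlinarith
  have := hsub.trans_lt (by linarith : Real.sqrt (1 + p * x) - 1 < (x + 4) / 4 - 1)
  rw [hs]; linarith

lemma g_contOn {p : ℝ} (hp : 0 < p) :
    ContinuousOn (fun x : ℝ => 2 * Real.log (1 + p * x) - x) (Set.Ici 0) := by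
  apply ContinuousOn.sub _ continuousOn_id
  apply ContinuousOn.mul continuousOn_const
  apply ContinuousOn.log
  · fun_prop
  · intro x hx
    have : (0:ℝ) ≤ x := hx
    nlinarith

lemma g_pos_of_lt {p xp : ℝ} (hp : 1 / 2 < p) (hxp : 0 < xp)
    (huniq : ∀ y : ℝ, 0 < y → y = 2 * Real.log (1 + p * y) → y = xp)
    {a : ℝ} (ha0 : 0 < a) (ha : a < xp) : 0 < 2 * Real.log (1 + p * a) - a := by
  have hp0 : 0 < p := by linarith
  by_contra hle
  push_neg at hle
  rcases eq_or_lt_of_le hle with h | h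
  · have := huniq a ha0 (by linarith)
    linarith [this ▸ ha]
  · -- g a < 0; find c < a with g c > 0, apply IVT
    set c := min (a / 2) ((2 * p - 1) / (2 * p)) with hc
    have hc0 : 0 < c := lt_min (by linarith) (div_pos (by linarith) (by linarith))
    have hca : c < a := (min_le_left _ _).trans_lt (by linarith)
    have hgc : 0 < 2 * Real.log (1 + p * c) - c := by
      have h1 : c ≤ (2 * p - 1) / (2 * p) := min_le_right _ _
      have h2 : c * (2 * p) ≤ 2 * p - 1 := by
        rwa [le_div_iff₀ (by linarith : (0:ℝ) < 2 * p)] at h1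
      exact g_pos_small hp0 hc0 (by linarith)
    have hcont : ContinuousOn (fun x : ℝ => 2 * Real.log (1 + p * x) - x)
        (Set.Icc c a) := (g_contOn hp0).mono (by
      intro x hx; exact le_trans hc0.le hx.1)
    have hiv := intermediate_value_Icc' hca.le hcont
    have : (0:ℝ) ∈ Set.Icc (2 * Real.log (1 + p * a) - a) (2 * Real.log (1 + p * c) - c) :=
      ⟨h.le, hgc.le⟩
    obtain ⟨z, hz, hz0⟩ := hiv this
    simp only at hz0
    have hz0' : 0 < z := lt_of_lt_of_le hc0 hz.1
    have := huniq z hz0' (by linarith)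
    linarith [hz.2, this ▸ ha]

lemma g_neg_of_gt {p xp : ℝ} (hp : 1 / 2 < p) (hxp : 0 < xp)
    (huniq : ∀ y : ℝ, 0 < y → y = 2 * Real.log (1 + p * y) → y = xp)
    {b : ℝ} (hb : xp < b) : 2 * Real.log (1 + p * b) - b < 0 := by
  have hp0 : 0 < p := by linarith
  have hb0 : 0 < b := hxp.trans hb
  by_contra hle
  push_neg at hle
  rcases eq_or_lt_of_le hle with h | h
  · have := huniq b hb0 (by linarith)
    linarith [this ▸ hb]
  · set d := max (16 * p - 8) b + 1 with hd
    have hbd : b < d := by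
      have := le_max_right (16 * p - 8) b
      linarith
    have hgd : 2 * Real.log (1 + p * d) - d < 0 := by
      apply g_neg_large hp
      have := le_max_left (16 * p - 8) b
      linarith
    have hcont : ContinuousOn (fun x : ℝ => 2 * Real.log (1 + p * x) - x)
        (Set.Icc b d) := (g_contOn hp0).mono (by
      intro x hx; exact le_trans hb0.le hx.1)
    have hiv := intermediate_value_Icc' hbd.le hcont
    have : (0:ℝ) ∈ Set.Icc (2 * Real.log (1 + p * d) - d) (2 * Real.log (1 + p * b) - b) :=
      ⟨hgd.le, h.le⟩
    obtain ⟨z, hz, hz0⟩ := hiv this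
    simp only at hz0
    have hz0' : 0 < z := lt_of_lt_of_le hb0 hz.1
    have := huniq z hz0' (by linarith)
    linarith [hz.1, this ▸ hb]

lemma log_slope_tendsto (t : ℝ) :
    Tendsto (fun δ : ℝ => Real.log (1 - δ * t) / δ) (𝓝[>] 0) (𝓝 (-t)) := by
  have h1 : HasDerivAt (fun δ : ℝ => 1 - δ * t) (-t) 0 := by
    simpa using ((hasDerivAt_id (0:ℝ)).mul_const t).const_sub 1
  have h : HasDerivAt (fun δ : ℝ => Real.log (1 - δ * t)) (-t) 0 := by
    have := h1.log (by norm_num)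
    simpa using this
  have h2 := hasDerivAt_iff_tendsto_slope.1 h
  have h3 : Tendsto (slope (fun δ : ℝ => Real.log (1 - δ * t)) 0) (𝓝[>] 0) (𝓝 (-t)) :=
    h2.mono_left (nhdsWithin_mono _ (fun x hx => ne_of_gt hx))
  refine h3.congr (fun δ => ?_)
  simp [slope_def_field, div_eq_mul_inv, mul_comm]

lemma second_tendsto {p : ℝ} (t : ℝ) (hp : 0 < p) (ht : 0 < 1 + p * t) :
    Tendsto (fun δ : ℝ => 2 * p / (p - δ) * Real.log (1 + (p - δ) * t)) (𝓝[>] 0)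
      (𝓝 (2 * Real.log (1 + p * t))) := by
  have hc : ContinuousAt (fun δ : ℝ => 2 * p / (p - δ) * Real.log (1 + (p - δ) * t)) 0 := by
    apply ContinuousAt.mul
    · exact continuousAt_const.div (continuousAt_const.sub continuousAt_id) (by simpa using hp.ne')
    · apply ContinuousAt.log
      · fun_prop
      · simpa using ht.ne'
  have h2 : Tendsto (fun δ : ℝ => 2 * p / (p - δ) * Real.log (1 + (p - δ) * t)) (𝓝[>] 0)
      (𝓝 (2 * p / (p - 0) * Real.log (1 + (p - 0) * t))) :=
    hc.tendsto.mono_left nhdsWithin_le_nhds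
  have h3 : 2 * p / (p - 0) * Real.log (1 + (p - 0) * t) = 2 * Real.log (1 + p * t) := by
    rw [sub_zero]
    rw [mul_div_assoc, div_self hp.ne']
    ring
  rwa [h3] at h2

lemma num_tendsto {p : ℝ} (t : ℝ) (hp : 0 < p) (ht : 0 < 1 + p * t) :
    Tendsto (fun δ : ℝ =>
        (Real.log (1 - δ * t) + 2 * p * δ / (p - δ) * Real.log (1 + (p - δ) * t)) / δ)
      (𝓝[>] 0) (𝓝 (2 * Real.log (1 + p * t) - t)) := by
  have hsum := (log_slope_tendsto t).add (second_tendsto t hp ht)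
  have heq : ∀ᶠ δ in 𝓝[>] (0:ℝ),
      Real.log (1 - δ * t) / δ + 2 * p / (p - δ) * Real.log (1 + (p - δ) * t)
        = (Real.log (1 - δ * t) + 2 * p * δ / (p - δ) * Real.log (1 + (p - δ) * t)) / δ := by
    filter_upwards [self_mem_nhdsWithin] with δ hδ
    have hδ0 : (δ:ℝ) ≠ 0 := ne_of_gt hδ
    field_simp
  have := hsum.congr' heq
  simpa [add_comm, sub_eq_add_neg] using this

/-- Fix `p > 1/2`. If for all sufficiently small `δ > 0`, `α₂(δ) ∈ (0,1)` is a nontrivial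
solution of the martingale equation
`(δ/p)^{2pδ/(p−δ)} (α(δ/p − 1) + 1)^{−2pδ/(p−δ)} = α`, then writing `α₂(δ) = 1 − δ x_δ`,
the quantity `x_δ = (1 − α₂(δ))/δ` converges as `δ → 0⁺` to the unique positive solution
`x(p)` of `x = 2 ln(1 + px)`. -/
theorem martingale_root_limit (p : ℝ) (hp : 1/2 < p) (α₂ : ℝ → ℝ)
    (hα : ∀ᶠ δ in 𝓝[>] (0:ℝ), α₂ δ ∈ Set.Ioo (0:ℝ) 1 ∧
      (δ / p) ^ (2 * p * δ / (p - δ)) * (α₂ δ * (δ / p - 1) + 1) ^ (-(2 * p * δ / (p - δ)))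
        = α₂ δ)
    (xp : ℝ) (hxp : 0 < xp) (hxeq : xp = 2 * Real.log (1 + p * xp))
    (huniq : ∀ y : ℝ, 0 < y → y = 2 * Real.log (1 + p * y) → y = xp) :
    Tendsto (fun δ : ℝ => (1 - α₂ δ) / δ) (𝓝[>] 0) (𝓝 xp) := by
  have hp0 : 0 < p := by linarith
  rw [Metric.tendsto_nhds]
  intro ε hε
  set ε' := min ε (xp / 2) with hε'
  have hε'0 : 0 < ε' := lt_min hε (by linarith)
  have hε'xp : ε' ≤ xp / 2 := min_le_right _ _
  have hε'ε : ε' ≤ ε := min_le_left _ _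
  set a := xp - ε' with ha
  set b := xp + ε' with hb
  have ha0 : 0 < a := by rw [ha]; linarith
  have hb0 : 0 < b := by rw [hb]; linarith
  have hga : 0 < 2 * Real.log (1 + p * a) - a :=
    g_pos_of_lt hp hxp huniq ha0 (by rw [ha]; linarith)
  have hgb : 2 * Real.log (1 + p * b) - b < 0 :=
    g_neg_of_gt hp hxp huniq (by rw [hb]; linarith)
  have hEa : ∀ᶠ δ in 𝓝[>] (0:ℝ),
      0 < Real.log (1 - δ * a) + 2 * p * δ / (p - δ) * Real.log (1 + (p - δ) * a) := by
    have h := (num_tendsto a hp0 (by positivity)).eventually (eventually_gt_nhds hga)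
    filter_upwards [h, self_mem_nhdsWithin] with δ hq hδ
    have hδ0 : (0:ℝ) < δ := hδ
    have := mul_pos hq hδ0
    rwa [div_mul_cancel₀ _ (ne_of_gt hδ0)] at this
  have hEb : ∀ᶠ δ in 𝓝[>] (0:ℝ),
      Real.log (1 - δ * b) + 2 * p * δ / (p - δ) * Real.log (1 + (p - δ) * b) < 0 := by
    have h := (num_tendsto b hp0 (by positivity)).eventually (eventually_lt_nhds hgb)
    filter_upwards [h, self_mem_nhdsWithin] with δ hq hδ
    have hδ0 : (0:ℝ) < δ := hδ
    have := mul_neg_of_neg_of_pos hq hδ0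
    rwa [div_mul_cancel₀ _ (ne_of_gt hδ0)] at this
  have hsmall : ∀ᶠ δ in 𝓝[>] (0:ℝ), δ < p ∧ δ * b < 1 := by
    have h1 : Set.Ioo (0:ℝ) (min p (1/b)) ∈ 𝓝[>] (0:ℝ) :=
      Ioo_mem_nhdsGT (lt_min hp0 (by positivity))
    filter_upwards [h1] with δ hδ
    refine ⟨hδ.2.trans_le (min_le_left _ _), ?_⟩
    have h2 := hδ.2.trans_le (min_le_right _ _)
    rw [lt_div_iff₀ hb0] at h2
    linarith
  filter_upwards [hα, hEa, hEb, hsmall, self_mem_nhdsWithin] with δ h1 h2 h3 h4 hδ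
  obtain ⟨⟨hα0, hα1⟩, heq⟩ := h1
  obtain ⟨hδp, hδb⟩ := h4
  have hδ0 : (0:ℝ) < δ := hδ
  set α := α₂ δ with hαdef
  set x := (1 - α) / δ with hx
  have hδx : δ * x = 1 - α := by rw [hx]; field_simp
  have hx0 : 0 < x := div_pos (by linarith) hδ0
  have hx1 : δ * x < 1 := by rw [hδx]; linarith
  set E := 2 * p * δ / (p - δ) with hE
  have hpd : 0 < p - δ := by linarith
  have hE0 : 0 < E := by rw [hE]; positivity
  have hcx : 0 < 1 + (p - δ) * x := by positivity
  have hA : α * (δ / p - 1) + 1 = δ / p * (1 + (p - δ) * x) := by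
    have hαx : α = 1 - δ * x := by linarith [hδx]
    rw [hαx]; field_simp; ring
  have hA0 : 0 < α * (δ / p - 1) + 1 := by rw [hA]; positivity
  have hlog := congrArg Real.log heq
  rw [Real.log_mul (Real.rpow_pos_of_pos (by positivity) _).ne'
    (Real.rpow_pos_of_pos hA0 _).ne', Real.log_rpow (by positivity), Real.log_rpow hA0] at hlog
  have hlogA : Real.log (α * (δ / p - 1) + 1)
      = Real.log (δ / p) + Real.log (1 + (p - δ) * x) := by
    rw [hA, Real.log_mul (by positivity : (0:ℝ) < δ / p).ne' hcx.ne']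
  have hroot : Real.log (1 - δ * x) + E * Real.log (1 + (p - δ) * x) = 0 := by
    have h5 : (1:ℝ) - δ * x = α := by linarith [hδx]
    rw [hlogA] at hlog
    rw [h5]
    linarith [hlog]
  obtain ⟨hcompL, hcompR⟩ := root_compare hδ0 hpd hE0 hx0 hx1 hroot
  have haδ : δ * a < 1 := by nlinarith
  have hlt1 : a < x := hcompL a ha0 haδ h2
  have hlt2 : x < b := hcompR b hb0 hδb h3
  rw [Real.dist_eq, abs_lt]
  constructor <;> [skip; skip] <;> rw [ha] at hlt1 <;> rw [hb] at hlt2 <;> linarith
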